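/- There exists an r×r matrix π with nonnegative entries such that Σ_{i,j} π_{ij} = 1 and, for all 1 ≤ i,j ≤ r, P_{ij} · Σ_{k=1}^r π_{ki} μ_{ki} = μ_{ij} π_{ij}. (These are the flow-balance equations of a continuous-time Markov chain on the finite set {1,…,r}² whose only transitions are from (k,i) to (i,k) at rate μ_{ki} P_{ik}.) -/

import Mathlib

open Finset

abbrev Mat (r : ℕ) := Fin r → Fin r → ℝ

/-- There exists a nonnegative matrix `π` summing to one that satisfies the
flow-balance equations `P_{ij} Σ_k π_{ki} μ_{ki} = μ_{ij} π_{ij}` of the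
continuous-time Markov chain on `{1,…,r}²` whose only transitions are from
`(k,i)` to `(i,k)` at rate `μ_{ki} P_{ik}`. -/
theorem stmt_6 {r : ℕ} (hr : 1 ≤ r) (mu P : Mat r)
    (hmu : ∀ i j, 0 < mu i j)
    (hP : ∀ i j, 0 ≤ P i j) (hProw : ∀ i, ∑ j, P i j = 1) :
    ∃ pi : Mat r, (∀ i j, 0 ≤ pi i j) ∧ (∑ i, ∑ j, pi i j) = 1 ∧
      ∀ i j, P i j * (∑ k, pi k i * mu k i) = mu i j * pi i j := by
  haveI : NeZero r := ⟨by omega⟩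
  -- Step 1: a nonzero vector v with ∑ k, P k i * v k = v i
  set M : Matrix (Fin r) (Fin r) ℝ := Matrix.of P - 1 with hM
  have hdet : M.det = 0 := by
    rw [← Matrix.exists_mulVec_eq_zero_iff]
    refine ⟨fun _ => 1, ?_, ?_⟩
    · intro h
      have := congrFun h ⟨0, by omega⟩
      simp at this
    · funext i
      simp only [Matrix.mulVec, dotProduct, hM, Matrix.sub_apply, Matrix.of_apply,
        Matrix.one_apply, mul_one, Pi.zero_apply]
      rw [Finset.sum_sub_distrib, hProw]
      simp
  have hdetT : (Matrix.transpose M).det = 0 := by rw [Matrix.det_transpose]; exact hdet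
  obtain ⟨v, hv0, hv⟩ := (Matrix.exists_mulVec_eq_zero_iff).2 hdetT
  have hvfix : ∀ i, ∑ k, P k i * v k = v i := by
    intro i
    have := congrFun hv i
    simp only [Matrix.mulVec, dotProduct, Matrix.transpose_apply, hM, Matrix.sub_apply,
      Matrix.of_apply, Matrix.one_apply, Pi.zero_apply, sub_mul, Finset.sum_sub_distrib] at this
    have h2 : (∑ j, (if j = i then (1:ℝ) else 0) * v j) = v i := by simp
    rw [h2] at this
    linarith
  -- Step 2: w = |v| is nonnegative stationary
  set w : Fin r → ℝ := fun i => |v i| with hw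
  have hwnn : ∀ i, 0 ≤ w i := fun i => abs_nonneg _
  have hge : ∀ i, w i ≤ ∑ k, w k * P k i := by
    intro i
    calc w i = |∑ k, P k i * v k| := by rw [hvfix]
    _ ≤ ∑ k, |P k i * v k| := Finset.abs_sum_le_sum_abs _ _
    _ = ∑ k, w k * P k i := by
        apply Finset.sum_congr rfl; intro k _
        rw [abs_mul, abs_of_nonneg (hP k i), mul_comm]
  have hsumeq : ∑ i, (∑ k, w k * P k i) = ∑ i, w i := by
    rw [Finset.sum_comm]
    apply Finset.sum_congr rfl
    intro k _
    rw [← Finset.mul_sum, hProw, mul_one]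
  have hwfix : ∀ i, ∑ k, w k * P k i = w i := by
    have h0 : ∑ i, ((∑ k, w k * P k i) - w i) = 0 := by
      rw [Finset.sum_sub_distrib, hsumeq, sub_self]
    have := (Finset.sum_eq_zero_iff_of_nonneg (fun i _ => sub_nonneg.2 (hge i))).1 h0
    intro i
    have := this i (Finset.mem_univ i)
    linarith
  -- w is nonzero somewhere
  obtain ⟨i0, hi0⟩ : ∃ i, 0 < w i := by
    by_contra h
    push_neg at h
    apply hv0
    funext i
    have : w i = 0 := le_antisymm (h i) (hwnn i)
    exact abs_eq_zero.mp this
  -- Step 3: normalization constant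
  set Z : ℝ := ∑ i, ∑ j, w i * P i j / mu i j with hZ
  have hZterm : ∀ i j, 0 ≤ w i * P i j / mu i j := fun i j =>
    div_nonneg (mul_nonneg (hwnn i) (hP i j)) (hmu i j).le
  have hZpos : 0 < Z := by
    obtain ⟨j0, _, hj0⟩ : ∃ j ∈ Finset.univ, 0 < P i0 j := by
      by_contra h
      push_neg at h
      have : ∑ j, P i0 j ≤ 0 := Finset.sum_nonpos (fun j hj => h j hj)
      rw [hProw] at this; linarith
    apply Finset.sum_pos' (fun i _ => Finset.sum_nonneg (fun j _ => hZterm i j))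
    refine ⟨i0, Finset.mem_univ i0, ?_⟩
    apply Finset.sum_pos' (fun j _ => hZterm i0 j)
    exact ⟨j0, Finset.mem_univ j0, div_pos (mul_pos hi0 hj0) (hmu i0 j0)⟩
  -- Step 4: define pi
  refine ⟨fun i j => w i * P i j / mu i j / Z, ?_, ?_, ?_⟩
  · intro i j; exact div_nonneg (hZterm i j) hZpos.le
  · have : (∑ i, ∑ j, w i * P i j / mu i j / Z) = (∑ i, ∑ j, w i * P i j / mu i j) / Z := by
      rw [Finset.sum_div]
      exact Finset.sum_congr rfl fun i _ => (Finset.sum_div _ _ _).symm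
    rw [this, ← hZ, div_self hZpos.ne']
  · intro i j
    have hkey : ∀ a b, w a * P a b / mu a b / Z * mu a b = w a * P a b / Z := by
      intro a b
      field_simp
      rw [mul_div_cancel_right₀ _ (hmu a b).ne']
    rw [show (∑ k, w k * P k i / mu k i / Z * mu k i) = ∑ k, w k * P k i / Z from
      Finset.sum_congr rfl (fun k _ => hkey k i)]
    rw [← Finset.sum_div, hwfix i]
    show P i j * (w i / Z) = mu i j * (w i * P i j / mu i j / Z)
    rw [mul_comm (mu i j), hkey i j]
    ring
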